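/- Let F be a finite field with q invertible in the field k, and let M_n be the monoid of n×n matrices over F. An element u of the ideal a_{n,r} ⊆ k[M_n] (span of matrices of rank ≤ r) is the two-sided unit of a_{n,r} if and only if: (1) [g⁻¹]·u·[g] = u for every g ∈ GL_n(F), and (2) u·[e_{n,r}] = [e_{n,r}], where e_{n,r} is the diagonal matrix with r ones followed by n-r zeros. -/

import Mathlib

open Module Matrix

section aux

/-- Moving a subspace of small dimension into a given subspace by an automorphism. -/
theorem kuhn_move_lemma {K V : Type*} [Field K] [AddCommGroup V] [Module K V]
    [FiniteDimensional K V] (W U : Submodule K V) (h : finrank K W ≤ finrank K U) :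
    ∃ φ : V ≃ₗ[K] V, ∀ w ∈ W, φ w ∈ U := by
  classical
  set s := finrank K W with hs
  have b := finBasis K U
  set v : Fin s → V := fun j => (b (Fin.castLE h j) : V) with hv
  have hli : LinearIndependent K v := by
    have h1 : LinearIndependent K fun i => (b i : V) :=
      b.linearIndependent.map' U.subtype U.ker_subtype
    exact h1.comp _ (Fin.castLE_injective h)
  set W' : Submodule K V := Submodule.span K (Set.range v) with hW'
  have hW'U : W' ≤ U := Submodule.span_le.2 (by rintro _ ⟨j, rfl⟩; exact (b _).2)
  have hrk : finrank K W' = s := by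
    rw [hW', finrank_span_eq_card hli, Fintype.card_fin]
  obtain ⟨C, hC⟩ := Submodule.exists_isCompl W
  obtain ⟨C', hC'⟩ := Submodule.exists_isCompl W'
  have e1 : W ≃ₗ[K] W' := LinearEquiv.ofFinrankEq _ _ (by rw [hrk])
  have e2 : C ≃ₗ[K] C' := LinearEquiv.ofFinrankEq _ _ (by
    have h1 := Submodule.finrank_add_eq_of_isCompl hC
    have h2 := Submodule.finrank_add_eq_of_isCompl hC'
    omega)
  refine ⟨((Submodule.prodEquivOfIsCompl W C hC).symm.trans
      ((e1.prodCongr e2).trans (Submodule.prodEquivOfIsCompl W' C' hC'))), fun w hw => ?_⟩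
  have key : (Submodule.prodEquivOfIsCompl W C hC) ((⟨w, hw⟩ : W), 0) = w := by
    rw [Submodule.coe_prodEquivOfIsCompl']; simp
  rw [LinearEquiv.trans_apply, LinearEquiv.trans_apply, ← key, LinearEquiv.symm_apply_apply,
    LinearEquiv.prodCongr_apply, Submodule.coe_prodEquivOfIsCompl']
  simp only [map_zero, Submodule.coe_zero, add_zero]
  exact hW'U (e1 ⟨w, hw⟩).2

/-- The subspace of vectors supported in the first `r` coordinates. -/
def kuhnUmod (F : Type*) [Field F] (n r : ℕ) : Submodule F (Fin n → F) where
  carrier := {x | ∀ i : Fin n, r ≤ (i : ℕ) → x i = 0}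
  add_mem' := by intro a b ha hb i hi; simp [ha i hi, hb i hi]
  zero_mem' := by intro i _; rfl
  smul_mem' := by intro c x hx i hi; simp [hx i hi]

noncomputable def kuhnUmodEquiv (F : Type*) [Field F] (n r : ℕ) (hrn : r ≤ n) :
    kuhnUmod F n r ≃ₗ[F] (Fin r → F) where
  toFun x := fun j => x.1 (Fin.castLE hrn j)
  map_add' x y := rfl
  map_smul' c x := rfl
  invFun y := ⟨fun i => if h : (i : ℕ) < r then y ⟨i, h⟩ else 0, by
    intro i hi; simp [Nat.not_lt.2 hi]⟩
  left_inv x := by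
    ext i
    by_cases h : (i : ℕ) < r
    · simp [h]
    · simp [h, x.2 i (Nat.not_lt.1 h)]
  right_inv y := by ext j; simp [Fin.castLE]

lemma kuhn_finrank_Umod (F : Type*) [Field F] (n r : ℕ) (hrn : r ≤ n) :
    finrank F (kuhnUmod F n r) = r := by
  rw [(kuhnUmodEquiv F n r hrn).finrank_eq]
  simp

theorem kuhn_exists_GL_left {F : Type*} [Field F] [Fintype F] [DecidableEq F] {n r : ℕ}
    (hrn : r ≤ n) (m : Matrix (Fin n) (Fin n) F) (hm : m.rank ≤ r) :
    ∃ g : GL (Fin n) F,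
      (Matrix.diagonal fun i : Fin n => if (i : ℕ) < r then (1 : F) else 0) *
        ((↑g⁻¹ : Matrix (Fin n) (Fin n) F) * m) = (↑g⁻¹ : Matrix (Fin n) (Fin n) F) * m := by
  classical
  set W := LinearMap.range m.mulVecLin with hW
  have hWr : finrank F W ≤ finrank F (kuhnUmod F n r) := by
    rw [kuhn_finrank_Umod F n r hrn]; exact hm
  obtain ⟨φ, hφ⟩ := kuhn_move_lemma W (kuhnUmod F n r) hWr
  set P := LinearMap.toMatrix' (φ : (Fin n → F) →ₗ[F] (Fin n → F)) with hP
  set Q := LinearMap.toMatrix' (φ.symm : (Fin n → F) →ₗ[F] (Fin n → F)) with hQ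
  have hQP : Q * P = 1 := by
    rw [hP, hQ, ← LinearMap.toMatrix'_comp]
    simp
  have hPQ : P * Q = 1 := by
    rw [hP, hQ, ← LinearMap.toMatrix'_comp]
    simp
  refine ⟨⟨Q, P, hQP, hPQ⟩, ?_⟩
  have hginv : ((⟨Q, P, hQP, hPQ⟩ : GL (Fin n) F)⁻¹ : GL (Fin n) F)
      = (⟨P, Q, hPQ, hQP⟩ : GL (Fin n) F) := rfl
  rw [hginv]
  have hrow : ∀ i j : Fin n, r ≤ (i : ℕ) → (P * m) i j = 0 := by
    intro i j hi
    have hcol : (fun kk => m kk j) ∈ W := ⟨Pi.single j 1, by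
      ext i'; simp [Matrix.mulVecLin_apply, Matrix.mulVec_single]⟩
    have hPm : (P * m) i j = (φ fun kk => m kk j) i := by
      rw [Matrix.mul_apply]
      have : P *ᵥ (fun kk => m kk j) = φ fun kk => m kk j := by
        rw [hP, ← Matrix.toLin'_apply, Matrix.toLin'_toMatrix']; rfl
      rw [← this]; rfl
    rw [hPm]
    exact hφ _ hcol i hi
  ext i j
  rw [Matrix.diagonal_mul]
  by_cases h : (i : ℕ) < r
  · simp [h]
  · simp only [h, if_false, zero_mul]
    exact (hrow i j (Nat.not_lt.1 h)).symm

theorem kuhn_exists_GL_right {F : Type*} [Field F] [Fintype F] [DecidableEq F] {n r : ℕ}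
    (hrn : r ≤ n) (m : Matrix (Fin n) (Fin n) F) (hm : m.rank ≤ r) :
    ∃ g : GL (Fin n) F,
      (m * (↑g⁻¹ : Matrix (Fin n) (Fin n) F)) *
        (Matrix.diagonal fun i : Fin n => if (i : ℕ) < r then (1 : F) else 0)
        = m * (↑g⁻¹ : Matrix (Fin n) (Fin n) F) := by
  obtain ⟨g, hg⟩ := kuhn_exists_GL_left hrn mᵀ (by rw [Matrix.rank_transpose]; exact hm)
  refine ⟨⟨(↑g : Matrix (Fin n) (Fin n) F)ᵀ, (↑g⁻¹ : Matrix (Fin n) (Fin n) F)ᵀ,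
    by rw [← Matrix.transpose_mul, Units.inv_mul, Matrix.transpose_one],
    by rw [← Matrix.transpose_mul, Units.mul_inv, Matrix.transpose_one]⟩, ?_⟩
  have h2 := congrArg Matrix.transpose hg
  simp only [Matrix.transpose_mul, Matrix.transpose_transpose,
    Matrix.diagonal_transpose] at h2
  exact h2

section tau
variable {k : Type*} [Field k] {M : Type*} [Monoid M]

noncomputable def kuhnTau (T : M → M) : MonoidAlgebra k M →ₗ[k] MonoidAlgebra k M :=
  MonoidAlgebra.mapDomainLinearMap k k T

lemma kuhnTau_single (T : M → M) (a : M) (c : k) :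
    kuhnTau T (MonoidAlgebra.single a c) = MonoidAlgebra.single (T a) c :=
  MonoidAlgebra.mapDomainLinearMap_single _ _ _

lemma kuhnTau_mul (T : M → M) (hT : ∀ a b : M, T (a * b) = T b * T a)
    (x y : MonoidAlgebra k M) : kuhnTau T (x * y) = kuhnTau T y * kuhnTau T x := by
  induction x using MonoidAlgebra.induction_linear with
  | zero => simp only [zero_mul, map_zero, mul_zero]
  | add f g hf hg => rw [add_mul, map_add, map_add, hf, hg, mul_add]
  | single a c =>
    induction y using MonoidAlgebra.induction_linear with
    | zero => simp only [zero_mul, map_zero, mul_zero]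
    | add f g hf hg => rw [mul_add, map_add, map_add, hf, hg, add_mul]
    | single b d =>
      show kuhnTau T (MonoidAlgebra.single a c * MonoidAlgebra.single b d) = _
      rw [MonoidAlgebra.single_mul_single, kuhnTau_single, kuhnTau_single, kuhnTau_single,
        MonoidAlgebra.single_mul_single, hT, mul_comm d c]
end tau

end aux

/-- Kuhn's criterion: let `F` be a finite field with `q = #F` invertible in `k`,
and `a_{n,r} ⊆ k[M_n]` the ideal spanned by matrices of rank `≤ r`.  An element
`u ∈ a_{n,r}` is the two-sided unit of `a_{n,r}` if and only if
(1) `[g⁻¹]·u·[g] = u` for every `g ∈ GL_n(F)`, and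
(2) `u·[e_{n,r}] = [e_{n,r}]` where `e_{n,r} = diag(I_r, 0_{n-r})`. -/
theorem kuhn_criterion (F : Type*) [Field F] [Fintype F] [DecidableEq F] (n r : ℕ)
    (hrn : r ≤ n) (k : Type*) [Field k] (hq : (Fintype.card F : k) ≠ 0)
    (u : MonoidAlgebra k (Matrix (Fin n) (Fin n) F))
    (hu : u ∈ Submodule.span k
      {y : MonoidAlgebra k (Matrix (Fin n) (Fin n) F) |
        ∃ m : Matrix (Fin n) (Fin n) F, Matrix.rank m ≤ r ∧
          y = MonoidAlgebra.single m (1 : k)}) :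
    (∀ x ∈ Submodule.span k
        {y : MonoidAlgebra k (Matrix (Fin n) (Fin n) F) |
          ∃ m : Matrix (Fin n) (Fin n) F, Matrix.rank m ≤ r ∧
            y = MonoidAlgebra.single m (1 : k)},
      u * x = x ∧ x * u = x) ↔
    ((∀ g : GL (Fin n) F,
        MonoidAlgebra.single ((g⁻¹ : GL (Fin n) F) : Matrix (Fin n) (Fin n) F) (1 : k) *
            u * MonoidAlgebra.single ((g : GL (Fin n) F) : Matrix (Fin n) (Fin n) F) (1 : k)
          = u) ∧
      u * MonoidAlgebra.single
            (Matrix.diagonal fun i : Fin n => if (i : ℕ) < r then (1 : F) else 0) (1 : k)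
        = MonoidAlgebra.single
            (Matrix.diagonal fun i : Fin n => if (i : ℕ) < r then (1 : F) else 0) (1 : k)) := by
  classical
  set S : Set (MonoidAlgebra k (Matrix (Fin n) (Fin n) F)) :=
    {y : MonoidAlgebra k (Matrix (Fin n) (Fin n) F) |
      ∃ m : Matrix (Fin n) (Fin n) F, Matrix.rank m ≤ r ∧
        y = MonoidAlgebra.single m (1 : k)} with hS
  set E : Matrix (Fin n) (Fin n) F :=
    Matrix.diagonal fun i : Fin n => if (i : ℕ) < r then (1 : F) else 0 with hE
  set A : Submodule k (MonoidAlgebra k (Matrix (Fin n) (Fin n) F)) := Submodule.span k S with hA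
  -- single product notation
  have sgl : ∀ (a b : Matrix (Fin n) (Fin n) F),
      MonoidAlgebra.single a (1 : k) * MonoidAlgebra.single b (1 : k)
        = MonoidAlgebra.single (a * b) (1 : k) := by
    intro a b; rw [MonoidAlgebra.single_mul_single, one_mul]
  -- rank of E
  have hrankE : Matrix.rank E ≤ r := by
    have hle : LinearMap.range E.mulVecLin ≤ kuhnUmod F n r := by
      rintro x ⟨v, rfl⟩ i hi
      simp [Matrix.mulVecLin_apply, hE, Matrix.mulVec_diagonal, Nat.not_lt.2 hi]
    calc Matrix.rank E = Module.finrank F (LinearMap.range E.mulVecLin) := rfl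
      _ ≤ Module.finrank F (kuhnUmod F n r) := Submodule.finrank_mono hle
      _ = r := kuhn_finrank_Umod F n r hrn
  have hmemS : ∀ m : Matrix (Fin n) (Fin n) F, Matrix.rank m ≤ r →
      MonoidAlgebra.single m (1 : k) ∈ A := fun m hm => Submodule.subset_span ⟨m, hm, rfl⟩
  -- closure of A under one-sided multiplication by singles
  have hmulL : ∀ (a : Matrix (Fin n) (Fin n) F), ∀ x ∈ A,
      MonoidAlgebra.single a (1 : k) * x ∈ A := by
    intro a x hx
    have hmap : Submodule.map (LinearMap.mulLeft k (MonoidAlgebra.single a (1 : k)))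
        (Submodule.span k S) ≤ A := by
      rw [Submodule.map_span]
      refine Submodule.span_le.2 ?_
      rintro _ ⟨_, ⟨m, hm, rfl⟩, rfl⟩
      refine Submodule.subset_span ⟨a * m, le_trans (Matrix.rank_mul_le_right a m) hm, ?_⟩
      rw [LinearMap.mulLeft_apply, sgl]
    exact hmap ⟨x, hx, rfl⟩
  have hmulR : ∀ (a : Matrix (Fin n) (Fin n) F), ∀ x ∈ A,
      x * MonoidAlgebra.single a (1 : k) ∈ A := by
    intro a x hx
    have hmap : Submodule.map (LinearMap.mulRight k (MonoidAlgebra.single a (1 : k)))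
        (Submodule.span k S) ≤ A := by
      rw [Submodule.map_span]
      refine Submodule.span_le.2 ?_
      rintro _ ⟨_, ⟨m, hm, rfl⟩, rfl⟩
      refine Submodule.subset_span ⟨m * a, le_trans (Matrix.rank_mul_le_left m a) hm, ?_⟩
      rw [LinearMap.mulRight_apply, sgl]
    exact hmap ⟨x, hx, rfl⟩
  -- tau preserves A
  have htauA : ∀ x ∈ A, kuhnTau Matrix.transpose x ∈ A := by
    intro x hx
    have hmap : Submodule.map
        (kuhnTau (Matrix.transpose : Matrix (Fin n) (Fin n) F → Matrix (Fin n) (Fin n) F))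
        (Submodule.span k S) ≤ A := by
      rw [Submodule.map_span]
      refine Submodule.span_le.2 ?_
      rintro _ ⟨_, ⟨m, hm, rfl⟩, rfl⟩
      refine Submodule.subset_span ⟨mᵀ, by rw [Matrix.rank_transpose]; exact hm, ?_⟩
      rw [kuhnTau_single]
    exact hmap ⟨x, hx, rfl⟩
  constructor
  · -- forward direction
    intro h
    refine ⟨fun g => ?_, (h _ (hmemS E hrankE)).1⟩
    set v := MonoidAlgebra.single ((g⁻¹ : GL (Fin n) F) : Matrix (Fin n) (Fin n) F) (1 : k)
      * u * MonoidAlgebra.single ((g : GL (Fin n) F) : Matrix (Fin n) (Fin n) F) (1 : k)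
      with hv
    have hvA : v ∈ A := hmulR _ _ (hmulL _ _ hu)
    have hv1 : v * u = v := (h v hvA).2
    have hgu : MonoidAlgebra.single ((g : GL (Fin n) F) : Matrix (Fin n) (Fin n) F) (1 : k) * u ∈ A :=
      hmulL _ _ hu
    have hv2 : v * u = u := by
      calc v * u = MonoidAlgebra.single (↑g⁻¹ : Matrix (Fin n) (Fin n) F) (1 : k)
            * (u * (MonoidAlgebra.single (↑g : Matrix (Fin n) (Fin n) F) (1 : k) * u)) := by
            rw [hv]; simp only [mul_assoc]
        _ = MonoidAlgebra.single (↑g⁻¹ : Matrix (Fin n) (Fin n) F) (1 : k)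
            * (MonoidAlgebra.single (↑g : Matrix (Fin n) (Fin n) F) (1 : k) * u) := by
            rw [(h _ hgu).1]
        _ = (MonoidAlgebra.single (↑g⁻¹ : Matrix (Fin n) (Fin n) F) (1 : k)
            * MonoidAlgebra.single (↑g : Matrix (Fin n) (Fin n) F) (1 : k)) * u := by
            simp only [mul_assoc]
        _ = u := by rw [sgl, Units.inv_mul, ← MonoidAlgebra.one_def, one_mul]
    exact hv1.symm.trans hv2
  · -- backward direction
    rintro ⟨h1, h2⟩
    -- u commutes with group elements
    have hcomm : ∀ g : GL (Fin n) F,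
        u * MonoidAlgebra.single ((g : GL (Fin n) F) : Matrix (Fin n) (Fin n) F) (1 : k)
          = MonoidAlgebra.single ((g : GL (Fin n) F) : Matrix (Fin n) (Fin n) F) (1 : k) * u := by
      intro g
      have hgg : MonoidAlgebra.single ((g : GL (Fin n) F) : Matrix (Fin n) (Fin n) F) (1 : k)
          * MonoidAlgebra.single ((g⁻¹ : GL (Fin n) F) : Matrix (Fin n) (Fin n) F) (1 : k) = 1 := by
        rw [sgl, Units.mul_inv, ← MonoidAlgebra.one_def]
      calc u * MonoidAlgebra.single (↑g : Matrix (Fin n) (Fin n) F) (1 : k)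
          = (MonoidAlgebra.single (↑g : Matrix (Fin n) (Fin n) F) (1 : k)
            * (MonoidAlgebra.single (↑g⁻¹ : Matrix (Fin n) (Fin n) F) (1 : k) * u))
            * MonoidAlgebra.single (↑g : Matrix (Fin n) (Fin n) F) (1 : k) := by
            rw [← mul_assoc, hgg, one_mul]
        _ = MonoidAlgebra.single (↑g : Matrix (Fin n) (Fin n) F) (1 : k)
            * (MonoidAlgebra.single (↑g⁻¹ : Matrix (Fin n) (Fin n) F) (1 : k) * u
              * MonoidAlgebra.single (↑g : Matrix (Fin n) (Fin n) F) (1 : k)) := by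
            simp only [mul_assoc]
        _ = MonoidAlgebra.single (↑g : Matrix (Fin n) (Fin n) F) (1 : k) * u := by
            rw [h1 g]
    -- left identity on generators
    have hle : ∀ m : Matrix (Fin n) (Fin n) F, Matrix.rank m ≤ r →
        u * MonoidAlgebra.single m (1 : k) = MonoidAlgebra.single m (1 : k) := by
      intro m hm
      obtain ⟨g, hg⟩ := kuhn_exists_GL_left hrn m hm
      rw [← hE] at hg
      have hmeq : (↑g : Matrix (Fin n) (Fin n) F)
          * (E * ((↑g⁻¹ : Matrix (Fin n) (Fin n) F) * m)) = m := by
        rw [hg, ← mul_assoc, Units.mul_inv, one_mul]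
      calc u * MonoidAlgebra.single m (1 : k)
          = u * (MonoidAlgebra.single (↑g : Matrix (Fin n) (Fin n) F) (1 : k)
            * (MonoidAlgebra.single E (1 : k)
              * MonoidAlgebra.single ((↑g⁻¹ : Matrix (Fin n) (Fin n) F) * m) (1 : k))) := by
            rw [sgl, sgl, hmeq]
        _ = (u * MonoidAlgebra.single (↑g : Matrix (Fin n) (Fin n) F) (1 : k))
            * (MonoidAlgebra.single E (1 : k)
              * MonoidAlgebra.single ((↑g⁻¹ : Matrix (Fin n) (Fin n) F) * m) (1 : k)) := by
            rw [mul_assoc]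
        _ = MonoidAlgebra.single (↑g : Matrix (Fin n) (Fin n) F) (1 : k)
            * ((u * MonoidAlgebra.single E (1 : k))
              * MonoidAlgebra.single ((↑g⁻¹ : Matrix (Fin n) (Fin n) F) * m) (1 : k)) := by
            rw [hcomm g]; simp only [mul_assoc]
        _ = MonoidAlgebra.single (↑g : Matrix (Fin n) (Fin n) F) (1 : k)
            * (MonoidAlgebra.single E (1 : k)
              * MonoidAlgebra.single ((↑g⁻¹ : Matrix (Fin n) (Fin n) F) * m) (1 : k)) := by
            rw [h2]
        _ = MonoidAlgebra.single m (1 : k) := by rw [sgl, sgl, hmeq]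
    -- the transposed element
    set w := kuhnTau (Matrix.transpose : Matrix (Fin n) (Fin n) F → Matrix (Fin n) (Fin n) F) u
      with hw
    have hT : ∀ a b : Matrix (Fin n) (Fin n) F, (a * b)ᵀ = bᵀ * aᵀ := Matrix.transpose_mul
    have hwA : w ∈ A := htauA u hu
    -- w commutes with group elements
    have hcommw : ∀ g : GL (Fin n) F,
        MonoidAlgebra.single ((g : GL (Fin n) F) : Matrix (Fin n) (Fin n) F) (1 : k) * w
          = w * MonoidAlgebra.single ((g : GL (Fin n) F) : Matrix (Fin n) (Fin n) F) (1 : k) := by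
      intro g
      set gT : GL (Fin n) F := ⟨(↑g : Matrix (Fin n) (Fin n) F)ᵀ,
        (↑g⁻¹ : Matrix (Fin n) (Fin n) F)ᵀ,
        by rw [← Matrix.transpose_mul, Units.inv_mul, Matrix.transpose_one],
        by rw [← Matrix.transpose_mul, Units.mul_inv, Matrix.transpose_one]⟩ with hgT
      have key := congrArg (kuhnTau (Matrix.transpose :
        Matrix (Fin n) (Fin n) F → Matrix (Fin n) (Fin n) F)) (h1 gT)
      rw [kuhnTau_mul _ hT, kuhnTau_mul _ hT, kuhnTau_single] at key
      have hgTval : ((gT : GL (Fin n) F) : Matrix (Fin n) (Fin n) F)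
          = (↑g : Matrix (Fin n) (Fin n) F)ᵀ := rfl
      have hgTinv : ((gT⁻¹ : GL (Fin n) F) : Matrix (Fin n) (Fin n) F)
          = (↑g⁻¹ : Matrix (Fin n) (Fin n) F)ᵀ := rfl
      rw [hgTval, hgTinv, kuhnTau_single, Matrix.transpose_transpose,
        Matrix.transpose_transpose, ← hw] at key
      -- key : single g 1 * (w * single g⁻¹ 1) = w
      calc MonoidAlgebra.single (↑g : Matrix (Fin n) (Fin n) F) (1 : k) * w
          = MonoidAlgebra.single (↑g : Matrix (Fin n) (Fin n) F) (1 : k)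
            * (w * (MonoidAlgebra.single (↑g⁻¹ : Matrix (Fin n) (Fin n) F) (1 : k)
              * MonoidAlgebra.single (↑g : Matrix (Fin n) (Fin n) F) (1 : k))) := by
            rw [sgl, Units.inv_mul, ← MonoidAlgebra.one_def, mul_one]
        _ = (MonoidAlgebra.single (↑g : Matrix (Fin n) (Fin n) F) (1 : k)
            * (w * MonoidAlgebra.single (↑g⁻¹ : Matrix (Fin n) (Fin n) F) (1 : k)))
            * MonoidAlgebra.single (↑g : Matrix (Fin n) (Fin n) F) (1 : k) := by
            simp only [mul_assoc]
        _ = w * MonoidAlgebra.single (↑g : Matrix (Fin n) (Fin n) F) (1 : k) := by rw [key]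
    -- E absorbs w on the left
    have hew : MonoidAlgebra.single E (1 : k) * w = MonoidAlgebra.single E (1 : k) := by
      have key := congrArg (kuhnTau (Matrix.transpose :
        Matrix (Fin n) (Fin n) F → Matrix (Fin n) (Fin n) F)) h2
      rw [kuhnTau_mul _ hT, kuhnTau_single, ← hw] at key
      rw [show Eᵀ = E from Matrix.diagonal_transpose _] at key
      exact key
    -- right identity on generators (for w)
    have hri : ∀ m : Matrix (Fin n) (Fin n) F, Matrix.rank m ≤ r →
        MonoidAlgebra.single m (1 : k) * w = MonoidAlgebra.single m (1 : k) := by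
      intro m hm
      obtain ⟨g, hg⟩ := kuhn_exists_GL_right hrn m hm
      rw [← hE] at hg
      set a : Matrix (Fin n) (Fin n) F := m * (↑g⁻¹ : Matrix (Fin n) (Fin n) F) with ha
      have hmeq : ((a * E) * (↑g : Matrix (Fin n) (Fin n) F)) = m := by
        rw [hg, ha, mul_assoc, Units.inv_mul, mul_one]
      calc MonoidAlgebra.single m (1 : k) * w
          = (MonoidAlgebra.single a (1 : k) * MonoidAlgebra.single E (1 : k))
            * (MonoidAlgebra.single (↑g : Matrix (Fin n) (Fin n) F) (1 : k) * w) := by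
            rw [sgl, ← mul_assoc, sgl, hmeq]
        _ = (MonoidAlgebra.single a (1 : k) * MonoidAlgebra.single E (1 : k))
            * (w * MonoidAlgebra.single (↑g : Matrix (Fin n) (Fin n) F) (1 : k)) := by
            rw [hcommw g]
        _ = MonoidAlgebra.single a (1 : k)
            * ((MonoidAlgebra.single E (1 : k) * w)
              * MonoidAlgebra.single (↑g : Matrix (Fin n) (Fin n) F) (1 : k)) := by
            simp only [mul_assoc]
        _ = MonoidAlgebra.single a (1 : k)
            * (MonoidAlgebra.single E (1 : k)
              * MonoidAlgebra.single (↑g : Matrix (Fin n) (Fin n) F) (1 : k)) := by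
            rw [hew]
        _ = MonoidAlgebra.single m (1 : k) := by rw [sgl, sgl, ← mul_assoc, hmeq]
    -- extend to the whole ideal by linearity
    have hL : ∀ x ∈ A, u * x = x := by
      intro x hx
      induction hx using Submodule.span_induction with
      | mem y hy => obtain ⟨m, hm, rfl⟩ := hy; exact hle m hm
      | zero => rw [mul_zero]
      | add a b _ _ hpa hpb => rw [mul_add, hpa, hpb]
      | smul c a _ hpa => rw [mul_smul_comm, hpa]
    have hR : ∀ x ∈ A, x * w = x := by
      intro x hx
      induction hx using Submodule.span_induction with
      | mem y hy => obtain ⟨m, hm, rfl⟩ := hy; exact hri m hm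
      | zero => rw [zero_mul]
      | add a b _ _ hpa hpb => rw [add_mul, hpa, hpb]
      | smul c a _ hpa => rw [smul_mul_assoc, hpa]
    have huw : u = w := ((hR u hu).symm).trans (hL w hwA)
    intro x hx
    exact ⟨hL x hx, by rw [huw]; exact hR x hx⟩
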